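/- Let N ≥ 2 and suppose l > 10N and |k_1|,...,|k_{N-1}| ≥ l are integers; set b = (1, 1/k_1,...,1/k_{N-1}). If c = Σ_{i=1}^N α_i rot^{i-1}(b) with α_i ∈ ℤ, max|α_i| = 1, and at least two of the α_i nonzero, then ‖c‖² ≥ 2(1 − N/l)² > 1 + (N−1)/l² ≥ ‖b‖². -/

import Mathlib

/-- The rotational shift operator on the Euclidean space `ℝ^N`. -/
def rotE {N : ℕ} [NeZero N] (x : EuclideanSpace ℝ (Fin N)) : EuclideanSpace ℝ (Fin N) :=
  WithLp.toLp 2 (fun i => x (i - 1))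

open Fin.NatCast in
lemma rotE_iter {N : ℕ} [NeZero N] (x : EuclideanSpace ℝ (Fin N)) (n : ℕ) (i : Fin N) :
    rotE^[n] x i = x (i - (n : Fin N)) := by
  induction n generalizing x with
  | zero => rw [Nat.cast_zero, sub_zero]; rfl
  | succ n ih =>
    rw [Function.iterate_succ_apply, ih]
    show x ((i - (n : Fin N)) - 1) = _
    rw [sub_sub, Nat.cast_succ]

lemma norm_sq_eucl {N : ℕ} [NeZero N] (c : EuclideanSpace ℝ (Fin N)) :
    ‖c‖ ^ 2 = ∑ j, (c j) ^ 2 := by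
  rw [EuclideanSpace.norm_eq, Real.sq_sqrt (by positivity)]
  simp [Real.norm_eq_abs, sq_abs]

/-- For `b = (1, 1/k_1, ..., 1/k_{N-1})` with `|k_i| ≥ l > 10N`, if
`c = Σ α_i rot^{i-1}(b)` with `max |α_i| = 1` and at least two `α_i` nonzero, then
`‖c‖² ≥ 2(1 − N/l)² > 1 + (N−1)/l² ≥ ‖b‖²`. -/
theorem stmt13 (N : ℕ) [NeZero N] (hN : 2 ≤ N) (l : ℕ) (hl : 10 * N < l)
    (k : Fin N → ℤ) (hk : ∀ i : Fin N, i ≠ 0 → (l : ℤ) ≤ |k i|)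
    (b : EuclideanSpace ℝ (Fin N))
    (hb : ∀ i : Fin N, b i = if i = 0 then 1 else ((k i : ℝ))⁻¹)
    (α : Fin N → ℤ) (hα1 : ∀ i, |α i| ≤ 1)
    (hα2 : ∃ i j : Fin N, i ≠ j ∧ α i ≠ 0 ∧ α j ≠ 0)
    (c : EuclideanSpace ℝ (Fin N))
    (hc : c = ∑ i : Fin N, (α i : ℝ) • rotE^[(i : ℕ)] b) :
    2 * (1 - (N : ℝ) / l) ^ 2 ≤ ‖c‖ ^ 2 ∧
    1 + ((N : ℝ) - 1) / l ^ 2 < 2 * (1 - (N : ℝ) / l) ^ 2 ∧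
    ‖b‖ ^ 2 ≤ 1 + ((N : ℝ) - 1) / l ^ 2 := by
  have hNr : (2:ℝ) ≤ (N:ℝ) := by exact_mod_cast hN
  have hlr : 10 * (N:ℝ) < (l:ℝ) := by exact_mod_cast hl
  have hl0 : (0:ℝ) < (l:ℝ) := by linarith
  have hl1 : (1:ℝ) ≤ (l:ℝ) := by linarith
  -- bound on nonzero coordinates of b
  have hbsmall : ∀ t : Fin N, t ≠ 0 → |b t| ≤ 1 / (l:ℝ) := by
    intro t ht
    rw [hb t, if_neg ht]
    have hkl : (l:ℝ) ≤ |(k t : ℝ)| := by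
      have := hk t ht
      rw [← Int.cast_abs]
      exact_mod_cast this
    rw [abs_inv, one_div]
    exact inv_anti₀ hl0 hkl
  -- coordinates of c
  have hcc : ∀ j : Fin N, c j = ∑ m : Fin N, (α m : ℝ) * b (j - m) := by
    intro j
    rw [hc]
    rw [show (∑ i : Fin N, (α i : ℝ) • rotE^[(i : ℕ)] b) j
        = ∑ i : Fin N, (α i : ℝ) * (rotE^[(i : ℕ)] b) j from by
      rw [WithLp.ofLp_sum, Finset.sum_apply]
      exact Finset.sum_congr rfl fun m _ => rfl]
    refine Finset.sum_congr rfl fun m _ => ?_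
    rw [rotE_iter, Fin.cast_val_eq_self]
  -- lower bound on |c i| for α i ≠ 0
  have key : ∀ i0 : Fin N, α i0 ≠ 0 → 1 - (N:ℝ) / l ≤ |c i0| := by
    intro i0 hi0
    have habs : |(α i0 : ℝ)| = 1 := by
      have h1 : 1 ≤ |α i0| := Int.one_le_abs hi0
      have h2 := hα1 i0
      have : |α i0| = 1 := le_antisymm h2 h1
      rw [← Int.cast_abs, this, Int.cast_one]
    have hsplit : c i0 = (α i0 : ℝ) * b (i0 - i0)
        + ∑ m ∈ Finset.univ.erase i0, (α m : ℝ) * b (i0 - m) := by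
      rw [hcc i0, ← Finset.add_sum_erase _ _ (Finset.mem_univ i0)]
    rw [sub_self, hb 0, if_pos rfl, mul_one] at hsplit
    have hrest : |∑ m ∈ Finset.univ.erase i0, (α m : ℝ) * b (i0 - m)|
        ≤ ((N:ℝ) - 1) / l := by
      calc |∑ m ∈ Finset.univ.erase i0, (α m : ℝ) * b (i0 - m)|
          ≤ ∑ m ∈ Finset.univ.erase i0, |(α m : ℝ) * b (i0 - m)| :=
            Finset.abs_sum_le_sum_abs _ _
        _ ≤ ∑ _m ∈ Finset.univ.erase i0, 1 / (l:ℝ) := by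
            refine Finset.sum_le_sum fun m hm => ?_
            have hm' : m ≠ i0 := Finset.ne_of_mem_erase hm
            have hne : i0 - m ≠ 0 := sub_ne_zero.mpr (Ne.symm hm')
            rw [abs_mul]
            have h1 : |(α m : ℝ)| ≤ 1 := by
              rw [← Int.cast_abs]; exact_mod_cast hα1 m
            have h2 := hbsmall _ hne
            calc |(α m : ℝ)| * |b (i0 - m)| ≤ 1 * (1 / (l:ℝ)) := by
                  exact mul_le_mul h1 h2 (abs_nonneg _) zero_le_one
              _ = 1 / (l:ℝ) := one_mul _
        _ = ((N:ℝ) - 1) / l := by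
            rw [Finset.sum_const, Finset.card_erase_of_mem (Finset.mem_univ i0)]
            simp only [Finset.card_univ, Fintype.card_fin, nsmul_eq_mul]
            have h1 : 1 ≤ N := le_trans one_le_two hN
            have hcast : ((N - 1 : ℕ) : ℝ) = (N:ℝ) - 1 := by
              rw [Nat.cast_sub h1, Nat.cast_one]
            rw [hcast]; ring
    have : 1 - ((N:ℝ) - 1) / l ≤ |c i0| := by
      have h3 : |(α i0 : ℝ)| - |∑ m ∈ Finset.univ.erase i0, (α m : ℝ) * b (i0 - m)|
          ≤ |c i0| := by
        have h := abs_sub_abs_le_abs_sub ((α i0 : ℝ))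
          (-(∑ m ∈ Finset.univ.erase i0, (α m : ℝ) * b (i0 - m)))
        rw [abs_neg, sub_neg_eq_add, ← hsplit] at h
        exact h
      rw [habs] at h3
      linarith
    have hNN : ((N:ℝ) - 1) / l ≤ (N:ℝ) / l :=
      (div_le_div_iff_of_pos_right hl0).mpr (by linarith)
    linarith [this]
  obtain ⟨i, j, hij, hi, hj⟩ := hα2
  have ht0 : (0:ℝ) ≤ 1 - (N:ℝ) / l := by
    have : (N:ℝ) / l ≤ 1 := by
      rw [div_le_one hl0]; linarith
    linarith
  have hsq : ∀ i0 : Fin N, α i0 ≠ 0 → (1 - (N:ℝ)/l)^2 ≤ (c i0)^2 := by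
    intro i0 hi0
    have := key i0 hi0
    calc (1 - (N:ℝ)/l)^2 ≤ |c i0|^2 := pow_le_pow_left₀ ht0 this 2
      _ = (c i0)^2 := sq_abs _
  refine ⟨?_, ?_, ?_⟩
  · rw [norm_sq_eucl]
    have hsub : ({i, j} : Finset (Fin N)) ⊆ Finset.univ := Finset.subset_univ _
    have h1 : ∑ m ∈ ({i, j} : Finset (Fin N)), (c m)^2 ≤ ∑ m : Fin N, (c m)^2 :=
      Finset.sum_le_sum_of_subset_of_nonneg hsub (fun m _ _ => sq_nonneg _)
    rw [Finset.sum_pair hij] at h1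
    have := hsq i hi
    have := hsq j hj
    linarith
  · have hkey : (l:ℝ)^2 + ((N:ℝ) - 1) < 2 * ((l:ℝ) - N)^2 := by nlinarith
    have e1 : 1 + ((N:ℝ) - 1) / l ^ 2 = ((l:ℝ)^2 + ((N:ℝ) - 1)) / l^2 := by
      field_simp
    have e2 : 2 * (1 - (N:ℝ) / l) ^ 2 = (2 * ((l:ℝ) - N)^2) / l^2 := by
      field_simp
    rw [e1, e2]
    exact (div_lt_div_iff_of_pos_right (by positivity : (0:ℝ) < (l:ℝ)^2)).mpr hkey
  · rw [norm_sq_eucl]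
    have hb0 : b 0 = 1 := by rw [hb 0, if_pos rfl]
    rw [← Finset.add_sum_erase _ _ (Finset.mem_univ (0 : Fin N)), hb0, one_pow]
    have hrest : ∑ t ∈ Finset.univ.erase (0 : Fin N), (b t)^2 ≤ ((N:ℝ) - 1) / l^2 := by
      calc ∑ t ∈ Finset.univ.erase (0 : Fin N), (b t)^2
          ≤ ∑ _t ∈ Finset.univ.erase (0 : Fin N), (1 / (l:ℝ))^2 := by
            refine Finset.sum_le_sum fun t ht => ?_
            have ht' : t ≠ 0 := Finset.ne_of_mem_erase ht
            have := hbsmall t ht'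
            calc (b t)^2 = |b t|^2 := (sq_abs _).symm
              _ ≤ (1/(l:ℝ))^2 := pow_le_pow_left₀ (abs_nonneg _) this 2
        _ = ((N:ℝ) - 1) / l^2 := by
            rw [Finset.sum_const, Finset.card_erase_of_mem (Finset.mem_univ _)]
            simp only [Finset.card_univ, Fintype.card_fin, nsmul_eq_mul]
            have h1 : 1 ≤ N := le_trans one_le_two hN
            have hcast : ((N - 1 : ℕ) : ℝ) = (N:ℝ) - 1 := by
              rw [Nat.cast_sub h1, Nat.cast_one]
            rw [hcast]
            field_simp
    linarith
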